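/- arXiv:0707.0861 — 4 statements merged into one kernel-verified Lean document; each statement's English description precedes it below -/
import Mathlib

section
/- Let (U_k^{(n)})_{k=1,...,d} be real-valued random variables on a sequence of probability spaces with measures P_0^n, such that for each k the sequence U_k^{(n)} converges in distribution (as n → ∞) to a chi-square distribution with k degrees of freedom. Let π(k,n) be penalties with π(1,n) < π(2,n) < ... < π(d,n) for all n, and π(j,n) - π(1,n) → ∞ as n → ∞ for every j = 2,...,d. Define the selection rule S_n = min{k : 1 ≤ k ≤ d, U_k^{(n)} - π(k,n) ≥ U_j^{(n)} - π(j,n) for all j = 1,...,d}. Then P_0^n(S_n > 1) → 0 as n → ∞. -/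
open MeasureTheory Filter

/-- The chi-square distribution with `k` degrees of freedom: the law of the squared
Euclidean norm of a standard `k`-dimensional Gaussian vector. -/
noncomputable def chiSq (k : ℕ) : Measure ℝ :=
  (Measure.pi fun _ : Fin k => ProbabilityTheory.gaussianReal 0 1).map
    (fun x => ∑ i, (x i) ^ 2)

/-- Convergence in distribution: the CDFs converge at every continuity point of
the CDF of the limit law `μ`. -/
def TendstoInDist {Ω : ℕ → Type*} [∀ n, MeasurableSpace (Ω n)]
    (P : ∀ n, Measure (Ω n)) (X : ∀ n, Ω n → ℝ) (μ : Measure ℝ) : Prop :=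
  ∀ t : ℝ, ContinuousAt (fun s => (μ (Set.Iic s)).toReal) t →
    Tendsto (fun n => ((P n) {ω | X n ω ≤ t}).toReal) atTop
      (nhds ((μ (Set.Iic t)).toReal))

lemma chiSq_meas (k : ℕ) : Measurable fun x : Fin k → ℝ => ∑ i, (x i) ^ 2 := by
  fun_prop

lemma chiSq_isProb (k : ℕ) : IsProbabilityMeasure (chiSq k) :=
  Measure.isProbabilityMeasure_map (chiSq_meas k).aemeasurable

lemma chiSq_Iic_neg (k : ℕ) {t : ℝ} (ht : t < 0) : chiSq k (Set.Iic t) = 0 := by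
  unfold chiSq
  rw [Measure.map_apply (chiSq_meas k) measurableSet_Iic]
  have : (fun x : Fin k → ℝ => ∑ i, (x i) ^ 2) ⁻¹' Set.Iic t = ∅ := by
    ext x
    simp only [Set.mem_preimage, Set.mem_Iic, Set.mem_empty_iff_false, iff_false, not_le]
    exact lt_of_lt_of_le ht (Finset.sum_nonneg fun i _ => sq_nonneg _)
  rw [this, measure_empty]

lemma cdf_mono (μ : Measure ℝ) [IsFiniteMeasure μ] :
    Monotone fun s => (μ (Set.Iic s)).toReal := fun a b hab =>
  ENNReal.toReal_mono (measure_ne_top μ _) (measure_mono (Set.Iic_subset_Iic.2 hab))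

lemma exists_cont_point (μ : Measure ℝ) [IsProbabilityMeasure μ] {ε : ℝ} (hε : 0 < ε) :
    ∃ t, ContinuousAt (fun s => (μ (Set.Iic s)).toReal) t ∧
      1 - ε < (μ (Set.Iic t)).toReal := by
  have hmono := cdf_mono μ
  have hcount := hmono.countable_not_continuousAt
  have htend : Tendsto (fun s => (μ (Set.Iic s)).toReal) atTop (nhds 1) := by
    have h := tendsto_measure_Iic_atTop μ
    rw [measure_univ] at h
    have := (ENNReal.tendsto_toReal ENNReal.one_ne_top).comp h
    simpa [Function.comp_def] using this
  have hev : ∀ᶠ s in atTop, 1 - ε < (μ (Set.Iic s)).toReal :=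
    htend.eventually (eventually_gt_nhds (by linarith))
  obtain ⟨a, ha⟩ := eventually_atTop.1 hev
  have hnot : ¬ Set.Ioi a ⊆ {x | ¬ContinuousAt (fun s => (μ (Set.Iic s)).toReal) x} := by
    intro hsub
    have h0 : volume (Set.Ioi a) = 0 :=
      measure_mono_null hsub (hcount.measure_zero volume)
    simp [Real.volume_Ioi] at h0
  obtain ⟨x, hxa, hxc⟩ := Set.not_subset.1 hnot
  exact ⟨x, not_not.1 hxc, ha x (le_of_lt hxa)⟩

theorem stmt3 {Ω : ℕ → Type*} [∀ n, MeasurableSpace (Ω n)]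
    (P : ∀ n, Measure (Ω n)) (hP : ∀ n, IsProbabilityMeasure (P n))
    (d : ℕ) (hd : 1 ≤ d)
    (U : (n : ℕ) → ℕ → Ω n → ℝ) (hUmeas : ∀ n k, Measurable (U n k))
    (π : ℕ → ℕ → ℝ)
    (hπmono : ∀ n j l, 1 ≤ j → j < l → l ≤ d → π j n < π l n)
    (hπdiv : ∀ j, 2 ≤ j → j ≤ d → Tendsto (fun n => π j n - π 1 n) atTop atTop)
    (hU : ∀ k, 1 ≤ k → k ≤ d → TendstoInDist P (fun n => U n k) (chiSq k))
    (S : (n : ℕ) → Ω n → ℕ)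
    (hS : ∀ n ω, S n ω = sInf {k | 1 ≤ k ∧ k ≤ d ∧
      ∀ j, 1 ≤ j → j ≤ d → U n j ω - π j n ≤ U n k ω - π k n}) :
    Tendsto (fun n => ((P n) {ω | 1 < S n ω}).toReal) atTop (nhds 0) := by
  rw [tendsto_order]
  constructor
  · intro a ha
    filter_upwards with n using lt_of_lt_of_le ha ENNReal.toReal_nonneg
  intro ε hε
  have hd0 : (0 : ℝ) < d := by exact_mod_cast Nat.lt_of_lt_of_le Nat.zero_lt_one hd
  set ε' : ℝ := ε / (4 * d) with hε'def
  have hε' : 0 < ε' := by positivity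
  -- choose continuity points with CDF close to 1
  have hch : ∀ j : ℕ, ∃ t : ℝ, 2 ≤ j → j ≤ d →
      ContinuousAt (fun s => ((chiSq j) (Set.Iic s)).toReal) t ∧
      1 - ε' < ((chiSq j) (Set.Iic t)).toReal := by
    intro j
    haveI := chiSq_isProb j
    obtain ⟨t, h1, h2⟩ := exists_cont_point (chiSq j) hε'
    exact ⟨t, fun _ _ => ⟨h1, h2⟩⟩
  choose t ht using hch
  -- CDF of chiSq 1 is continuous at -1, with value 0
  have hcont1 : ContinuousAt (fun s => ((chiSq 1) (Set.Iic s)).toReal) (-1) := by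
    have heq : (fun s => ((chiSq 1) (Set.Iic s)).toReal) =ᶠ[nhds (-1 : ℝ)] fun _ => 0 := by
      filter_upwards [Iio_mem_nhds (by norm_num : (-1 : ℝ) < 0)] with s hs
      simp [chiSq_Iic_neg 1 hs]
    rw [continuousAt_congr heq]
    exact continuousAt_const
  have hE1 : ∀ᶠ n in atTop, ((P n) {ω | U n 1 ω ≤ -1}).toReal < ε' := by
    have h := hU 1 le_rfl hd (-1) hcont1
    rw [chiSq_Iic_neg 1 (by norm_num)] at h
    simp only [ENNReal.toReal_zero] at h
    exact h.eventually (eventually_lt_nhds hε')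
  have hE2 : ∀ᶠ n in atTop, ∀ j ∈ Finset.Icc 2 d,
      1 - ε' < ((P n) {ω | U n j ω ≤ t j}).toReal := by
    rw [eventually_all_finset]
    intro j hj
    obtain ⟨hj2, hjd⟩ := Finset.mem_Icc.1 hj
    obtain ⟨htc, htv⟩ := ht j hj2 hjd
    exact (hU j (le_trans one_le_two hj2) hjd (t j) htc).eventually (eventually_gt_nhds htv)
  have hE3 : ∀ᶠ n in atTop, ∀ j ∈ Finset.Icc 2 d, t j + 1 ≤ π j n - π 1 n := by
    rw [eventually_all_finset]
    intro j hj
    obtain ⟨hj2, hjd⟩ := Finset.mem_Icc.1 hj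
    exact (hπdiv j hj2 hjd).eventually_ge_atTop (t j + 1)
  filter_upwards [hE1, hE2, hE3] with n h1 h2 h3
  haveI := hP n
  -- set inclusion
  have hsub : {ω | 1 < S n ω} ⊆ ⋃ j ∈ Finset.Icc 2 d,
      ({ω | U n 1 ω ≤ -1} ∪ {ω | t j < U n j ω}) := by
    intro ω hω
    simp only [Set.mem_setOf_eq] at hω
    rw [hS n ω] at hω
    have h1mem : (1 : ℕ) ∉ {k | 1 ≤ k ∧ k ≤ d ∧
        ∀ j, 1 ≤ j → j ≤ d → U n j ω - π j n ≤ U n k ω - π k n} := by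
      intro hmem
      have := Nat.sInf_le hmem
      omega
    have hex : ∃ j, 1 ≤ j ∧ j ≤ d ∧ U n 1 ω - π 1 n < U n j ω - π j n := by
      by_contra hcon
      push_neg at hcon
      exact h1mem ⟨le_rfl, hd, fun j hj1 hjd => hcon j hj1 hjd⟩
    obtain ⟨j, hj1, hjd, hjlt⟩ := hex
    have hj2 : 2 ≤ j := by
      rcases eq_or_lt_of_le hj1 with rfl | h
      · exact absurd hjlt (lt_irrefl _)
      · omega
    refine Set.mem_biUnion (Finset.mem_Icc.2 ⟨hj2, hjd⟩) ?_
    by_cases hU1 : U n 1 ω ≤ -1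
    · exact Or.inl hU1
    · right
      push_neg at hU1
      have hπ := h3 j (Finset.mem_Icc.2 ⟨hj2, hjd⟩)
      simp only [Set.mem_setOf_eq]
      linarith
  -- measure bound
  have hb : (P n) {ω | 1 < S n ω} ≤ ∑ j ∈ Finset.Icc 2 d,
      ((P n) {ω | U n 1 ω ≤ -1} + (P n) {ω | t j < U n j ω}) :=
    le_trans (measure_mono hsub) (le_trans (measure_biUnion_finset_le _ _)
      (Finset.sum_le_sum fun j _ => measure_union_le _ _))
  have hfin : ∀ j ∈ Finset.Icc 2 d,
      (P n) {ω | U n 1 ω ≤ -1} + (P n) {ω | t j < U n j ω} ≠ ⊤ := by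
    intro j _
    exact ENNReal.add_ne_top.2 ⟨measure_ne_top _ _, measure_ne_top _ _⟩
  have htR : ((P n) {ω | 1 < S n ω}).toReal ≤ ∑ j ∈ Finset.Icc 2 d,
      (((P n) {ω | U n 1 ω ≤ -1}).toReal + ((P n) {ω | t j < U n j ω}).toReal) := by
    calc ((P n) {ω | 1 < S n ω}).toReal
        ≤ (∑ j ∈ Finset.Icc 2 d,
            ((P n) {ω | U n 1 ω ≤ -1} + (P n) {ω | t j < U n j ω})).toReal :=
          ENNReal.toReal_mono (ENNReal.sum_ne_top.2 hfin) hb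
      _ = _ := by
          rw [ENNReal.toReal_sum hfin]
          exact Finset.sum_congr rfl fun j _ =>
            ENNReal.toReal_add (measure_ne_top _ _) (measure_ne_top _ _)
  have hterm : ∀ j ∈ Finset.Icc 2 d,
      ((P n) {ω | U n 1 ω ≤ -1}).toReal + ((P n) {ω | t j < U n j ω}).toReal ≤ 2 * ε' := by
    intro j hj
    have hms : MeasurableSet {ω | U n j ω ≤ t j} :=
      measurableSet_le (hUmeas n j) measurable_const
    have hcompl : {ω | t j < U n j ω} = {ω | U n j ω ≤ t j}ᶜ := by
      ext ω; simp [not_le]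
    have hc : ((P n) {ω | t j < U n j ω}).toReal
        = 1 - ((P n) {ω | U n j ω ≤ t j}).toReal := by
      rw [hcompl, measure_compl hms (measure_ne_top _ _), measure_univ,
        ENNReal.toReal_sub_of_le prob_le_one ENNReal.one_ne_top, ENNReal.toReal_one]
    have h2' := h2 j hj
    linarith
  have hcard : ((Finset.Icc 2 d).card : ℝ) ≤ d := by
    rw [Nat.card_Icc]
    exact_mod_cast (by omega : d + 1 - 2 ≤ d)
  calc ((P n) {ω | 1 < S n ω}).toReal
      ≤ ∑ j ∈ Finset.Icc 2 d,
          (((P n) {ω | U n 1 ω ≤ -1}).toReal + ((P n) {ω | t j < U n j ω}).toReal) := htR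
    _ ≤ (Finset.Icc 2 d).card • (2 * ε') := Finset.sum_le_card_nsmul _ _ _ hterm
    _ = ((Finset.Icc 2 d).card : ℝ) * (2 * ε') := by rw [nsmul_eq_mul]
    _ ≤ (d : ℝ) * (2 * ε') := by
        have : (0 : ℝ) ≤ 2 * ε' := by positivity
        exact mul_le_mul_of_nonneg_right hcard this
    _ = ε / 2 := by
        rw [hε'def]; field_simp; ring
    _ < ε := by linarith
end

section
/- Let Y_1, Y_2, ... be i.i.d. ℝ^k-valued random vectors with finite covariance, and suppose there is an index K ≤ k such that E[Y_{1,i}] = 0 for i = 1,...,K-1 and E[Y_{1,K}] = C_K ≠ 0. Let L be a k×k symmetric positive definite matrix. Then U_n = (n^{-1/2} Σ_{j=1}^n Y_j) L (n^{-1/2} Σ_{j=1}^n Y_j)ᵀ tends to infinity in probability: for every s ∈ ℝ, P(U_n ≤ s) → 0 as n → ∞. -/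
open MeasureTheory ProbabilityTheory Filter Matrix

lemma aux_posdef_lower {k : ℕ} (L : Matrix (Fin k) (Fin k) ℝ) (hL : L.PosDef) (K : Fin k) :
    ∃ δ : ℝ, 0 < δ ∧ ∀ x : Fin k → ℝ, δ * (x K) ^ 2 ≤ x ⬝ᵥ L.mulVec x := by
  set f : (Fin k → ℝ) → ℝ := fun x => x ⬝ᵥ L.mulVec x with hf_def
  have hf : Continuous f := by
    simp only [hf_def, dotProduct, Matrix.mulVec]
    exact continuous_finset_sum _ fun i _ => (continuous_apply i).mul
      (continuous_finset_sum _ fun j _ => continuous_const.mul (continuous_apply j))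
  have hne : (Metric.sphere (0 : Fin k → ℝ) 1).Nonempty := by
    refine ⟨Pi.single K 1, ?_⟩
    rw [mem_sphere_zero_iff_norm, Pi.norm_single]
    norm_num
  obtain ⟨z, hz, hmin⟩ :=
    (isCompact_sphere (0 : Fin k → ℝ) 1).exists_isMinOn hne hf.continuousOn
  have hz1 : ‖z‖ = 1 := mem_sphere_zero_iff_norm.1 hz
  have hz0 : z ≠ 0 := by
    intro h; rw [h, norm_zero] at hz1; norm_num at hz1
  have hδ : 0 < f z := by simpa [hf_def] using hL.dotProduct_mulVec_pos hz0
  refine ⟨f z, hδ, fun x => ?_⟩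
  rcases eq_or_ne x 0 with rfl | hx
  · simp [hf_def]
  · have hxn : 0 < ‖x‖ := norm_pos_iff.2 hx
    have hy : ‖x‖⁻¹ • x ∈ Metric.sphere (0 : Fin k → ℝ) 1 := by
      rw [mem_sphere_zero_iff_norm, norm_smul, norm_inv, norm_norm,
        inv_mul_cancel₀ hxn.ne']
    have h1 : f z ≤ f (‖x‖⁻¹ • x) := hmin hy
    have h2 : f (‖x‖⁻¹ • x) = ‖x‖⁻¹ * (‖x‖⁻¹ * f x) := by
      simp [hf_def, Matrix.mulVec_smul, smul_dotProduct, dotProduct_smul,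
        smul_eq_mul]
    have h3 : (x K) ^ 2 ≤ ‖x‖ ^ 2 := by
      have h : |x K| ≤ ‖x‖ := by
        simpa [Real.norm_eq_abs] using norm_le_pi_norm x K
      calc (x K) ^ 2 = |x K| ^ 2 := (sq_abs _).symm
        _ ≤ ‖x‖ ^ 2 := pow_le_pow_left₀ (abs_nonneg _) h 2
    have h4 : f z * ‖x‖ ^ 2 ≤ f x := by
      have := mul_le_mul_of_nonneg_right (h1.trans_eq h2) (by positivity : (0:ℝ) ≤ ‖x‖ ^ 2)
      calc f z * ‖x‖ ^ 2 ≤ ‖x‖⁻¹ * (‖x‖⁻¹ * f x) * ‖x‖ ^ 2 := this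
        _ = f x := by
          rw [show ‖x‖⁻¹ * (‖x‖⁻¹ * f x) * ‖x‖ ^ 2 = f x * (‖x‖⁻¹ * ‖x‖) ^ 2 from by ring,
            inv_mul_cancel₀ hxn.ne']
          ring
    calc f z * (x K) ^ 2 ≤ f z * ‖x‖ ^ 2 := by
          exact mul_le_mul_of_nonneg_left h3 hδ.le
      _ ≤ f x := h4

theorem stmt6 {Ω : Type*} [MeasurableSpace Ω] (P : Measure Ω) [IsProbabilityMeasure P]
    (k : ℕ) (Y : ℕ → Ω → (Fin k → ℝ))
    (hmeas : ∀ n, Measurable (Y n))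
    (hindep : iIndepFun Y P)
    (hident : ∀ n, P.map (Y n) = P.map (Y 0))
    (hintegrable : ∀ i, Integrable (fun ω => Y 0 ω i) P)
    (hcov : ∀ i j, Integrable (fun ω => Y 0 ω i * Y 0 ω j) P)
    (K : Fin k)
    (hzero : ∀ i, i < K → ∫ ω, Y 0 ω i ∂P = 0)
    (C : ℝ) (hC : C ≠ 0) (hK : ∫ ω, Y 0 ω K ∂P = C)
    (L : Matrix (Fin k) (Fin k) ℝ) (hL : L.PosDef)
    (U : ℕ → Ω → ℝ)
    (hU : ∀ n ω, U n ω =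
      (fun i => ((n : ℝ)) ^ (-(1 : ℝ)/2) * ∑ j ∈ Finset.range n, Y j ω i) ⬝ᵥ
        L.mulVec (fun i => ((n : ℝ)) ^ (-(1 : ℝ)/2) * ∑ j ∈ Finset.range n, Y j ω i)) :
    ∀ s : ℝ, Tendsto (fun n => (P {ω | U n ω ≤ s}).toReal) atTop (nhds 0) := by
  intro s
  obtain ⟨δ, hδ, hδle⟩ := aux_posdef_lower L hL K
  -- Strong law of large numbers for the K-th coordinate
  set X : ℕ → Ω → ℝ := fun n ω => Y n ω K with hX
  have hXmeas : ∀ n, Measurable (X n) := fun n => (measurable_pi_apply K).comp (hmeas n)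
  have hint : Integrable (X 0) P := hintegrable K
  have hpind : Pairwise (Function.onFun (IndepFun · · P) X) := fun i j hij =>
    (hindep.indepFun hij).comp (measurable_pi_apply K) (measurable_pi_apply K)
  have hid : ∀ i, IdentDistrib (X i) (X 0) P P := fun i =>
    ⟨(hXmeas i).aemeasurable, (hXmeas 0).aemeasurable, by
      show P.map ((fun v : Fin k → ℝ => v K) ∘ Y i) = P.map ((fun v : Fin k → ℝ => v K) ∘ Y 0)
      rw [← Measure.map_map (measurable_pi_apply K) (hmeas i), hident i,
        Measure.map_map (measurable_pi_apply K) (hmeas 0)]⟩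
  have hSLLN := strong_law_ae_real X hint hpind hid
  have hEX : (P[X 0]) = C := hK
  rw [hEX] at hSLLN
  -- a.e., U n ω → ∞
  have hU_tendsto : ∀ᵐ ω ∂P, Tendsto (fun n => U n ω) atTop atTop := by
    filter_upwards [hSLLN] with ω hω
    have hC2 : Tendsto (fun n : ℕ => ((∑ j ∈ Finset.range n, X j ω) / n) ^ 2) atTop
        (nhds (C ^ 2)) := hω.pow 2
    have hCpos : (0:ℝ) < C ^ 2 := by positivity
    have hmain : Tendsto
        (fun n : ℕ => δ * ((n : ℝ) * ((∑ j ∈ Finset.range n, X j ω) / n) ^ 2)) atTop atTop :=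
      Tendsto.const_mul_atTop hδ
        (Filter.Tendsto.atTop_mul_pos hCpos tendsto_natCast_atTop_atTop hC2)
    apply tendsto_atTop_mono' atTop ?_ hmain
    filter_upwards [eventually_ge_atTop 1] with n hn
    rw [hU n ω]
    have key := hδle (fun i => ((n : ℝ)) ^ (-(1 : ℝ)/2) * ∑ j ∈ Finset.range n, Y j ω i)
    refine le_trans (le_of_eq ?_) key
    have hn0 : ((n : ℝ)) ≠ 0 := by
      exact_mod_cast (Nat.one_le_iff_ne_zero.mp hn)
    have hpow : (((n : ℝ)) ^ (-(1 : ℝ)/2)) ^ 2 = ((n : ℝ))⁻¹ := by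
      rw [← Real.rpow_natCast (((n : ℝ)) ^ (-(1 : ℝ)/2)) 2,
        ← Real.rpow_mul (Nat.cast_nonneg n)]
      norm_num
      exact Real.rpow_neg_one _
    simp only [hX]
    rw [mul_pow, hpow]
    field_simp
  -- measurability of the sets
  have hAmeas : ∀ n, MeasurableSet {ω | U n ω ≤ s} := by
    intro n
    have hS : ∀ i, Measurable (fun ω => ∑ j ∈ Finset.range n, Y j ω i) := fun i =>
      Finset.measurable_sum _ fun j _ => (measurable_pi_apply i).comp (hmeas j)
    have hUn : Measurable (U n) := by
      have heq : U n = fun ω =>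
          (fun i => ((n : ℝ)) ^ (-(1 : ℝ)/2) * ∑ j ∈ Finset.range n, Y j ω i) ⬝ᵥ
            L.mulVec (fun i => ((n : ℝ)) ^ (-(1 : ℝ)/2) * ∑ j ∈ Finset.range n, Y j ω i) :=
        funext (hU n)
      rw [heq]
      simp only [dotProduct, Matrix.mulVec]
      exact Finset.measurable_sum _ fun i _ =>
        (measurable_const.mul (hS i)).mul
          (Finset.measurable_sum _ fun j _ => measurable_const.mul
            (measurable_const.mul (hS j)))
    exact measurableSet_le hUn measurable_const
  -- dominated convergence with indicator functions
  have hconv := tendsto_integral_of_dominated_convergence (μ := P)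
    (F := fun n => Set.indicator {ω | U n ω ≤ s} (fun _ => (1:ℝ)))
    (f := fun _ => (0:ℝ)) (fun _ => (1:ℝ))
    (fun n => ((measurable_const.indicator (hAmeas n)).aestronglyMeasurable))
    (integrable_const 1)
    (fun n => ae_of_all _ fun ω => by
      simp only [Set.indicator_apply, Set.mem_setOf_eq]
      split_ifs <;> simp)
    (by
      filter_upwards [hU_tendsto] with ω hω
      have h0 : ∀ᶠ n in atTop,
          Set.indicator {ω' | U n ω' ≤ s} (fun _ => (1:ℝ)) ω = 0 := by
        filter_upwards [hω.eventually_gt_atTop s] with n hn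
        exact Set.indicator_of_notMem (by simpa using not_le.2 hn) _
      exact Tendsto.congr' (by filter_upwards [h0] with n hn; exact hn.symm)
        tendsto_const_nhds)
  have heq : ∀ n, (∫ ω, Set.indicator {ω | U n ω ≤ s} (fun _ => (1:ℝ)) ω ∂P)
      = (P {ω | U n ω ≤ s}).toReal := fun n => integral_indicator_one (hAmeas n)
  simpa [heq] using hconv
end

section
/- Consider random variables U_1^{(n)}, ..., U_d^{(n)} with U_i^{(n)} ≥ U_j^{(n)} whenever i ≥ j (each U being a nonneg. increasing quadratic-form sequence), penalties π with π(K,n) - π(i,n) = o(n) for all i < K ≤ d, and suppose: (a) for each i < K, U_i^{(n)} converges in distribution to χ²_i; (b) there exists c > 0 with P(U_K^{(n)} ≥ c n) → 1. Define S_n = min{k ≤ d : U_k^{(n)} - π(k,n) ≥ U_j^{(n)} - π(j,n) for all j ≤ d}. Then P(S_n ≥ K) → 1 and U_{S_n}^{(n)} → ∞ in probability as n → ∞. -/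
open MeasureTheory Filter

instance chiSq_prob (k : ℕ) : IsProbabilityMeasure (chiSq k) := by
  unfold chiSq
  have : Measurable (fun x : Fin k → ℝ => ∑ i, (x i) ^ 2) := by measurability
  exact Measure.isProbabilityMeasure_map this.aemeasurable

lemma tail_lemma {Ω : ℕ → Type*} [∀ n, MeasurableSpace (Ω n)]
    (P : ∀ n, Measure (Ω n)) (hP : ∀ n, IsProbabilityMeasure (P n))
    (X : ∀ n, Ω n → ℝ) (hX : ∀ n, Measurable (X n))
    (μ : Measure ℝ) [IsProbabilityMeasure μ]
    (hdist : TendstoInDist P X μ)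
    (M : ℕ → ℝ) (hM : Tendsto M atTop atTop) :
    Tendsto (fun n => ((P n) {ω | M n ≤ X n ω}).toReal) atTop (nhds 0) := by
  rw [NormedAddCommGroup.tendsto_nhds_zero]
  intro ε hε
  set F : ℝ → ℝ := fun s => (μ (Set.Iic s)).toReal with hF
  have hFmono : Monotone F := fun a b hab =>
    ENNReal.toReal_mono (measure_ne_top _ _) (measure_mono (Set.Iic_subset_Iic.2 hab))
  have hFtop : Tendsto F atTop (nhds 1) := by
    have h1 : Tendsto (fun x => μ (Set.Iic x)) atTop (nhds (μ Set.univ)) :=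
      tendsto_measure_Iic_atTop μ
    rw [measure_univ] at h1
    have := (ENNReal.tendsto_toReal (by simp : (1:ENNReal) ≠ ⊤)).comp h1
    rw [ENNReal.toReal_one] at this
    exact this
  have hev : ∀ᶠ t in atTop, 1 - ε/2 < F t :=
    hFtop.eventually (eventually_gt_nhds (by linarith))
  obtain ⟨T, hT⟩ := hev.exists_forall_of_atTop
  have hcount : Set.Countable {x | ¬ContinuousAt F x} :=
    hFmono.countable_not_continuousAt
  have hdense : Dense {x | ¬ContinuousAt F x}ᶜ := hcount.dense_compl ℝ
  obtain ⟨t, ht, htT⟩ := hdense.exists_mem_open isOpen_Ioi (Set.nonempty_Ioi (a := T))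
  have hcont : ContinuousAt F t := not_not.mp ht
  have hFt : 1 - ε/2 < F t := hT t (le_of_lt htT)
  have hconv := hdist t hcont
  have hev2 : ∀ᶠ n in atTop, 1 - ε < ((P n) {ω | X n ω ≤ t}).toReal :=
    hconv.eventually (eventually_gt_nhds (by linarith))
  have hev3 : ∀ᶠ n in atTop, t < M n := hM.eventually_gt_atTop t
  filter_upwards [hev2, hev3] with n h2 h3
  have hmeas : MeasurableSet {ω | X n ω ≤ t} := (hX n) measurableSet_Iic
  haveI := hP n
  have hsub : {ω | M n ≤ X n ω} ⊆ {ω | X n ω ≤ t}ᶜ := by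
    intro ω hω
    simp only [Set.mem_compl_iff, Set.mem_setOf_eq, not_le] at *
    linarith
  have hcompl : (P n) {ω | X n ω ≤ t}ᶜ = 1 - (P n) {ω | X n ω ≤ t} :=
    prob_compl_eq_one_sub hmeas
  have hle : ((P n) {ω | M n ≤ X n ω}).toReal ≤ ((P n) {ω | X n ω ≤ t}ᶜ).toReal :=
    ENNReal.toReal_mono (measure_ne_top _ _) (measure_mono hsub)
  rw [hcompl, ENNReal.toReal_sub_of_le prob_le_one (by simp)] at hle
  simp only [ENNReal.toReal_one] at hle
  rw [Real.norm_eq_abs, abs_of_nonneg ENNReal.toReal_nonneg]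
  linarith

theorem stmt8 {Ω : ℕ → Type*} [∀ n, MeasurableSpace (Ω n)]
    (P : ∀ n, Measure (Ω n)) (hP : ∀ n, IsProbabilityMeasure (P n))
    (d K : ℕ) (hK1 : 1 ≤ K) (hKd : K ≤ d)
    (U : (n : ℕ) → ℕ → Ω n → ℝ) (hUmeas : ∀ n k, Measurable (U n k))
    (hUnonneg : ∀ n k ω, 1 ≤ k → k ≤ d → 0 ≤ U n k ω)
    (hUmono : ∀ n ω i j, 1 ≤ i → i ≤ j → j ≤ d → U n i ω ≤ U n j ω)
    (π : ℕ → ℕ → ℝ)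
    (hπmono : ∀ n j l, 1 ≤ j → j < l → l ≤ d → π j n < π l n)
    (hπo : ∀ i, 1 ≤ i → i < K →
      Tendsto (fun n => (π K n - π i n) / (n : ℝ)) atTop (nhds 0))
    (hUdist : ∀ i, 1 ≤ i → i < K → TendstoInDist P (fun n => U n i) (chiSq i))
    (hUK : ∃ c > (0 : ℝ),
      Tendsto (fun n => ((P n) {ω | c * n ≤ U n K ω}).toReal) atTop (nhds 1))
    (S : (n : ℕ) → Ω n → ℕ) (hSmeas : ∀ n, Measurable (S n))
    (hS : ∀ n ω, S n ω = sInf {k | 1 ≤ k ∧ k ≤ d ∧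
      ∀ j, 1 ≤ j → j ≤ d → U n j ω - π j n ≤ U n k ω - π k n}) :
    Tendsto (fun n => ((P n) {ω | K ≤ S n ω}).toReal) atTop (nhds 1) ∧
      ∀ t : ℝ, Tendsto (fun n => ((P n) {ω | U n (S n ω) ω ≤ t}).toReal) atTop (nhds 0) := by
  obtain ⟨c, hc, hg⟩ := hUK
  have hd1 : 1 ≤ d := le_trans hK1 hKd
  -- S n ω belongs to the argmax set
  have hSmem : ∀ n ω, 1 ≤ S n ω ∧ S n ω ≤ d ∧
      ∀ j, 1 ≤ j → j ≤ d → U n j ω - π j n ≤ U n (S n ω) ω - π (S n ω) n := by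
    intro n ω
    have hne : {k | 1 ≤ k ∧ k ≤ d ∧
        ∀ j, 1 ≤ j → j ≤ d → U n j ω - π j n ≤ U n k ω - π k n}.Nonempty := by
      obtain ⟨k, hk, hmax⟩ := Finset.exists_max_image (Finset.Icc 1 d)
        (fun j => U n j ω - π j n) ⟨1, by simp [hd1]⟩
      simp only [Finset.mem_Icc] at hk
      exact ⟨k, hk.1, hk.2, fun j hj1 hjd => hmax j (Finset.mem_Icc.2 ⟨hj1, hjd⟩)⟩
    have := Nat.sInf_mem hne
    rw [← hS n ω] at this
    exact this
  -- complement event B n = {c n ≤ U_K}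
  set B : (n : ℕ) → Set (Ω n) := fun n => {ω | c * n ≤ U n K ω} with hB
  have hBmeas : ∀ n, MeasurableSet (B n) := fun n => (hUmeas n K) measurableSet_Ici
  have hBc : ∀ n, ((P n) (B n)ᶜ).toReal = 1 - ((P n) (B n)).toReal := by
    intro n
    haveI := hP n
    rw [prob_compl_eq_one_sub (hBmeas n), ENNReal.toReal_sub_of_le prob_le_one (by simp),
      ENNReal.toReal_one]
  have hBc0 : Tendsto (fun n => ((P n) (B n)ᶜ).toReal) atTop (nhds 0) := by
    have : Tendsto (fun n => 1 - ((P n) (B n)).toReal) atTop (nhds (1 - 1)) :=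
      (tendsto_const_nhds).sub hg
    simp only [sub_self] at this
    exact this.congr (fun n => (hBc n).symm)
  -- tail events
  have htail : ∀ i, 1 ≤ i → i < K →
      Tendsto (fun n => ((P n) {ω | c * n - (π K n - π i n) ≤ U n i ω}).toReal)
        atTop (nhds 0) := by
    intro i hi1 hiK
    apply tail_lemma P hP _ (fun n => hUmeas n i) (chiSq i) (hUdist i hi1 hiK)
    -- M n = c n - (π K n - π i n) → ∞
    have hq := hπo i hi1 hiK
    have h1 : Tendsto (fun n : ℕ => c - (π K n - π i n) / n) atTop (nhds c) := by
      simpa using tendsto_const_nhds.sub hq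
    have h2 : Tendsto (fun n : ℕ => (c - (π K n - π i n) / n) * n) atTop atTop :=
      h1.pos_mul_atTop hc tendsto_natCast_atTop_atTop
    apply h2.congr'
    filter_upwards [eventually_ne_atTop 0] with n hn
    have hn' : (n : ℝ) ≠ 0 := Nat.cast_ne_zero.2 hn
    field_simp
  -- the bad event is small
  have hsmall : Tendsto (fun n => ((P n) {ω | S n ω < K}).toReal) atTop (nhds 0) := by
    set A : (n : ℕ) → ℕ → Set (Ω n) :=
      fun n i => {ω | U n K ω - π K n ≤ U n i ω - π i n} with hA
    have hsub : ∀ n, {ω | S n ω < K} ⊆ ⋃ i ∈ Finset.Ico 1 K, A n i := by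
      intro n ω hω
      obtain ⟨h1, h2, h3⟩ := hSmem n ω
      refine Set.mem_biUnion (Finset.mem_Ico.2 ⟨h1, hω⟩) ?_
      exact h3 K hK1 hKd
    have hbound : ∀ n, ((P n) {ω | S n ω < K}).toReal ≤
        ∑ i ∈ Finset.Ico 1 K, ((P n) (A n i)).toReal := by
      intro n
      haveI := hP n
      calc ((P n) {ω | S n ω < K}).toReal
          ≤ ((P n) (⋃ i ∈ Finset.Ico 1 K, A n i)).toReal :=
            ENNReal.toReal_mono (measure_ne_top _ _) (measure_mono (hsub n))
        _ ≤ (∑ i ∈ Finset.Ico 1 K, (P n) (A n i)).toReal := by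
            apply ENNReal.toReal_mono
            · exact ENNReal.sum_ne_top.2 fun i _ => measure_ne_top _ _
            · exact measure_biUnion_finset_le _ _
        _ = ∑ i ∈ Finset.Ico 1 K, ((P n) (A n i)).toReal :=
            ENNReal.toReal_sum fun i _ => measure_ne_top _ _
    have hterm : ∀ i ∈ Finset.Ico 1 K,
        Tendsto (fun n => ((P n) (A n i)).toReal) atTop (nhds 0) := by
      intro i hi
      rw [Finset.mem_Ico] at hi
      apply squeeze_zero (fun n => ENNReal.toReal_nonneg)
        (g := fun n => ((P n) (B n)ᶜ).toReal +
          ((P n) {ω | c * n - (π K n - π i n) ≤ U n i ω}).toReal)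
      · intro n
        haveI := hP n
        have hsub2 : A n i ⊆ (B n)ᶜ ∪ {ω | c * n - (π K n - π i n) ≤ U n i ω} := by
          intro ω hω
          by_cases hb : ω ∈ B n
          · right
            have hω' : U n K ω - π K n ≤ U n i ω - π i n := hω
            have hb' : c * n ≤ U n K ω := hb
            show c * (n : ℝ) - (π K n - π i n) ≤ U n i ω
            linarith
          · left; exact hb
        calc ((P n) (A n i)).toReal
            ≤ ((P n) ((B n)ᶜ ∪ {ω | c * n - (π K n - π i n) ≤ U n i ω})).toReal :=
              ENNReal.toReal_mono (measure_ne_top _ _) (measure_mono hsub2)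
          _ ≤ _ := by
              rw [← ENNReal.toReal_add (measure_ne_top _ _) (measure_ne_top _ _)]
              exact ENNReal.toReal_mono
                (by simp [ENNReal.add_ne_top, measure_ne_top]) (measure_union_le _ _)
      · simpa using hBc0.add (htail i hi.1 hi.2)
    have hsum : Tendsto (fun n => ∑ i ∈ Finset.Ico 1 K, ((P n) (A n i)).toReal)
        atTop (nhds 0) := by
      have := tendsto_finset_sum (Finset.Ico 1 K) hterm
      simpa using this
    exact squeeze_zero (fun n => ENNReal.toReal_nonneg) hbound hsum
  constructor
  · -- P(K ≤ S) → 1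
    have hcompl : ∀ n, ((P n) {ω | K ≤ S n ω}).toReal = 1 - ((P n) {ω | S n ω < K}).toReal := by
      intro n
      haveI := hP n
      have hmeas : MeasurableSet {ω | S n ω < K} := (hSmeas n) (measurableSet_Iio (a := K))
      have : {ω | K ≤ S n ω} = {ω | S n ω < K}ᶜ := by
        ext ω; simp [not_lt]
      rw [this, prob_compl_eq_one_sub hmeas,
        ENNReal.toReal_sub_of_le prob_le_one (by simp), ENNReal.toReal_one]
    have : Tendsto (fun n => 1 - ((P n) {ω | S n ω < K}).toReal) atTop (nhds (1 - 0)) :=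
      tendsto_const_nhds.sub hsmall
    simp only [sub_zero] at this
    exact this.congr fun n => (hcompl n).symm
  · intro t
    apply squeeze_zero' (Eventually.of_forall fun n => ENNReal.toReal_nonneg)
      (g := fun n => ((P n) {ω | S n ω < K}).toReal + ((P n) (B n)ᶜ).toReal)
    · have hev : ∀ᶠ n : ℕ in atTop, t < c * n := by
        have : Tendsto (fun n : ℕ => c * n) atTop atTop :=
          Tendsto.const_mul_atTop hc tendsto_natCast_atTop_atTop
        exact this.eventually_gt_atTop t
      filter_upwards [hev] with n hn
      haveI := hP n
      have hsub : {ω | U n (S n ω) ω ≤ t} ⊆ {ω | S n ω < K} ∪ (B n)ᶜ := by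
        intro ω hω
        by_cases hk : S n ω < K
        · left; exact hk
        · right
          push_neg at hk
          intro hb
          obtain ⟨h1, h2, _⟩ := hSmem n ω
          have hmono := hUmono n ω K (S n ω) hK1 hk h2
          have hb' : c * (n : ℝ) ≤ U n K ω := hb
          have hωt : U n (S n ω) ω ≤ t := hω
          linarith
      calc ((P n) {ω | U n (S n ω) ω ≤ t}).toReal
          ≤ ((P n) ({ω | S n ω < K} ∪ (B n)ᶜ)).toReal :=
            ENNReal.toReal_mono (measure_ne_top _ _) (measure_mono hsub)
        _ ≤ _ := by
            rw [← ENNReal.toReal_add (measure_ne_top _ _) (measure_ne_top _ _)]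
            exact ENNReal.toReal_mono
              (by simp [ENNReal.add_ne_top, measure_ne_top]) (measure_union_le _ _)
    · simpa using hsmall.add hBc0
end

section
/- Let Y_1, Y_2, ... be i.i.d. real random variables with mean θ_0 and finite variance. Let θ̂_n be a √n-consistent estimator of θ_0 and let C_1, C_2 be real constants. Define l_j* = C_1 (Y_j - θ̂_n)² - C_2 and l*(Y_j) = C_1 (Y_j - θ_0)² - C_2. Then n^{-1/2} |Σ_{j=1}^n (l_j* - l*(Y_j))| → 0 in probability as n → ∞, using the bound n^{-1/2}|Σ_j(l_j* - l*(Y_j))| ≤ |C_1| √n |θ̂_n - θ_0| (|Ȳ_n - θ̂_n| + |Ȳ_n - θ_0|). -/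
open MeasureTheory ProbabilityTheory Filter

private lemma aux_alg (n : ℕ) (C1 C2 a b : ℝ) (Y : ℕ → ℝ) :
    (Real.sqrt n)⁻¹ * |∑ j ∈ Finset.range n, ((C1 * (Y j - a) ^ 2 - C2)
          - (C1 * (Y j - b) ^ 2 - C2))|
    = |C1| * (Real.sqrt n * |a - b|) * |a + b - 2 * ((∑ j ∈ Finset.range n, Y j) / n)| := by
  rcases Nat.eq_zero_or_pos n with rfl | hn
  · simp
  set S := ∑ j ∈ Finset.range n, Y j with hS
  have hnpos : (0:ℝ) < n := Nat.cast_pos.2 hn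
  have hsum : ∑ j ∈ Finset.range n, ((C1 * (Y j - a) ^ 2 - C2) - (C1 * (Y j - b) ^ 2 - C2))
      = C1 * (b - a) * (2 * S - n * (a + b)) := by
    have h : ∀ j ∈ Finset.range n, ((C1 * (Y j - a) ^ 2 - C2) - (C1 * (Y j - b) ^ 2 - C2))
        = (C1 * (b - a) * 2) * Y j - C1 * (b - a) * (a + b) := by intros; ring
    rw [Finset.sum_congr rfl h, Finset.sum_sub_distrib, ← Finset.mul_sum, Finset.sum_const,
      Finset.card_range, ← hS, nsmul_eq_mul]
    ring
  rw [hsum]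
  set s := Real.sqrt (n:ℝ) with hsdef
  have hs : s * s = (n:ℝ) := Real.mul_self_sqrt (by positivity)
  have hspos : (0:ℝ) < s := Real.sqrt_pos.2 hnpos
  have key : a + b - 2 * (S / (n:ℝ)) = -(2 * S - (n:ℝ) * (a + b)) / (n:ℝ) := by
    field_simp
    ring
  rw [key, abs_div, abs_neg, abs_of_pos hnpos, abs_mul, abs_mul, abs_sub_comm a b]
  rw [← hs]
  field_simp

private lemma aux_tendsto {f : ℕ → ℝ} (h0 : ∀ n, 0 ≤ f n)
    (h : ∀ δ > (0:ℝ), ∀ᶠ n in atTop, f n < δ) : Tendsto f atTop (nhds 0) := by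
  rw [Metric.tendsto_atTop]
  intro δ hδ
  obtain ⟨N, hN⟩ := eventually_atTop.1 (h δ hδ)
  exact ⟨N, fun n hn => by
    rw [Real.dist_eq, sub_zero, abs_of_nonneg (h0 n)]; exact hN n hn⟩

theorem stmt15 {Ω : Type*} [MeasurableSpace Ω] (P : Measure Ω) [IsProbabilityMeasure P]
    (Y : ℕ → Ω → ℝ) (hmeas : ∀ n, Measurable (Y n))
    (hindep : iIndepFun Y P)
    (hident : ∀ n, P.map (Y n) = P.map (Y 0))
    (θ0 : ℝ)
    (hint : Integrable (Y 0) P) (hmean : ∫ ω, Y 0 ω ∂P = θ0)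
    (hint2 : Integrable (fun ω => (Y 0 ω) ^ 2) P)
    (C1 C2 : ℝ)
    (θhat : ℕ → Ω → ℝ) (hθmeas : ∀ n, Measurable (θhat n))
    (htight : ∀ ε > (0 : ℝ), ∃ M : ℝ, ∀ᶠ n : ℕ in atTop,
      (P {ω | M < Real.sqrt n * |θhat n ω - θ0|}).toReal < ε) :
    ∀ ε > (0 : ℝ),
      Tendsto (fun n : ℕ => (P {ω | ε ≤ (Real.sqrt n)⁻¹ *
        |∑ j ∈ Finset.range n, ((C1 * (Y j ω - θhat n ω) ^ 2 - C2)
          - (C1 * (Y j ω - θ0) ^ 2 - C2))|}).toReal)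
        atTop (nhds 0) := by
  -- convergence in probability of θhat to θ0
  have hθprob : ∀ η > (0:ℝ), ∀ δ > (0:ℝ), ∀ᶠ n : ℕ in atTop,
      (P {ω | η ≤ |θhat n ω - θ0|}).toReal < δ := by
    intro η hη δ hδ
    obtain ⟨M, hM⟩ := htight δ hδ
    have hsqrt : Tendsto (fun x : ℝ => Real.sqrt x) atTop atTop := by
      simpa only [← Real.sqrt_eq_rpow] using tendsto_rpow_atTop (y := (1:ℝ)/2) (by norm_num)
    have hsq : Tendsto (fun n : ℕ => Real.sqrt n * η) atTop atTop :=
      (hsqrt.comp tendsto_natCast_atTop_atTop).atTop_mul_const hη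
    filter_upwards [hM, hsq.eventually_gt_atTop M] with n h1 h2
    refine lt_of_le_of_lt (ENNReal.toReal_mono (measure_ne_top _ _) (measure_mono ?_)) h1
    intro ω hω
    simp only [Set.mem_setOf_eq] at hω ⊢
    calc M < Real.sqrt n * η := h2
      _ ≤ Real.sqrt n * |θhat n ω - θ0| :=
        mul_le_mul_of_nonneg_left hω (Real.sqrt_nonneg _)
  -- strong law of large numbers
  have hae : ∀ᵐ ω ∂P, Tendsto (fun n : ℕ => (∑ i ∈ Finset.range n, Y i ω) / n) atTop (nhds θ0) := by
    have := ProbabilityTheory.strong_law_ae_real Y hint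
      (fun i j hij => hindep.indepFun hij)
      (fun i => ⟨(hmeas i).aemeasurable, (hmeas 0).aemeasurable, hident i⟩)
    rwa [hmean] at this
  have hYmeas : ∀ n : ℕ, AEStronglyMeasurable (fun ω => (∑ i ∈ Finset.range n, Y i ω) / (n:ℝ)) P :=
    fun n => ((Finset.measurable_sum _ (fun i _ => hmeas i)).div_const _).aestronglyMeasurable
  have htm : TendstoInMeasure P (fun n ω => (∑ i ∈ Finset.range n, Y i ω) / n) atTop
      (fun _ => θ0) := tendstoInMeasure_of_tendsto_ae hYmeas hae
  have hYprob : ∀ η > (0:ℝ), ∀ δ > (0:ℝ), ∀ᶠ n : ℕ in atTop,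
      (P {ω | η ≤ |(∑ i ∈ Finset.range n, Y i ω) / n - θ0|}).toReal < δ := by
    intro η hη δ hδ
    have h1 := (tendstoInMeasure_iff_norm.1 htm) η hη
    have h2 : Tendsto (fun n : ℕ =>
        (P {ω | η ≤ |(∑ i ∈ Finset.range n, Y i ω) / n - θ0|}).toReal) atTop (nhds 0) := by
      have := (ENNReal.tendsto_toReal (by simp)).comp h1
      simpa [Function.comp_def, Real.dist_eq] using this
    exact h2.eventually_lt_const hδ
  -- combined: θhat + θ0 - 2 * Ȳ → 0 in probability
  have hZprob : ∀ η > (0:ℝ), ∀ δ > (0:ℝ), ∀ᶠ n : ℕ in atTop,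
      (P {ω | η ≤ |θhat n ω + θ0 - 2 * ((∑ i ∈ Finset.range n, Y i ω) / n)|}).toReal < δ := by
    intro η hη δ hδ
    filter_upwards [hθprob (η/2) (by linarith) (δ/2) (by linarith),
      hYprob (η/4) (by linarith) (δ/2) (by linarith)] with n h1 h2
    have hsub : {ω | η ≤ |θhat n ω + θ0 - 2 * ((∑ i ∈ Finset.range n, Y i ω) / n)|}
        ⊆ {ω | η/2 ≤ |θhat n ω - θ0|} ∪ {ω | η/4 ≤ |(∑ i ∈ Finset.range n, Y i ω) / n - θ0|} := by
      intro ω hω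
      simp only [Set.mem_setOf_eq, Set.mem_union] at hω ⊢
      by_contra hc
      push_neg at hc
      obtain ⟨hc1, hc2⟩ := hc
      have e1 : |θhat n ω + θ0 - 2 * ((∑ i ∈ Finset.range n, Y i ω) / n)|
          ≤ |θhat n ω - θ0| + 2 * |(∑ i ∈ Finset.range n, Y i ω) / n - θ0| := by
        have : θhat n ω + θ0 - 2 * ((∑ i ∈ Finset.range n, Y i ω) / n)
            = (θhat n ω - θ0) - 2 * ((∑ i ∈ Finset.range n, Y i ω) / n - θ0) := by ring
        rw [this]
        calc |(θhat n ω - θ0) - 2 * ((∑ i ∈ Finset.range n, Y i ω) / n - θ0)|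
            ≤ |θhat n ω - θ0| + |2 * ((∑ i ∈ Finset.range n, Y i ω) / n - θ0)| :=
              abs_sub _ _
          _ = |θhat n ω - θ0| + 2 * |(∑ i ∈ Finset.range n, Y i ω) / n - θ0| := by
              rw [abs_mul, abs_two]
      linarith
    calc (P {ω | η ≤ |θhat n ω + θ0 - 2 * ((∑ i ∈ Finset.range n, Y i ω) / n)|}).toReal
        ≤ (P ({ω | η/2 ≤ |θhat n ω - θ0|}
            ∪ {ω | η/4 ≤ |(∑ i ∈ Finset.range n, Y i ω) / n - θ0|})).toReal :=
          ENNReal.toReal_mono (measure_ne_top _ _) (measure_mono hsub)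
      _ ≤ (P {ω | η/2 ≤ |θhat n ω - θ0|}).toReal
            + (P {ω | η/4 ≤ |(∑ i ∈ Finset.range n, Y i ω) / n - θ0|}).toReal := by
          rw [← ENNReal.toReal_add (measure_ne_top _ _) (measure_ne_top _ _)]
          exact ENNReal.toReal_mono (by simp [ENNReal.add_ne_top, measure_ne_top])
            (measure_union_le _ _)
      _ < δ/2 + δ/2 := add_lt_add h1 h2
      _ = δ := by ring
  -- main argument
  intro ε hε
  refine aux_tendsto (fun n => ENNReal.toReal_nonneg) ?_
  intro δ hδ
  obtain ⟨M, hM⟩ := htight (δ/2) (by linarith)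
  set M' : ℝ := max M 1 with hM'
  have hM'pos : (0:ℝ) < M' := lt_of_lt_of_le one_pos (le_max_right _ _)
  have hC : (0:ℝ) < (|C1| + 1) * (M' + 1) := by positivity
  set η : ℝ := ε / ((|C1| + 1) * (M' + 1)) with hη
  have hηpos : 0 < η := div_pos hε hC
  have hηε : η * ((|C1| + 1) * (M' + 1)) = ε := div_mul_cancel₀ _ (ne_of_gt hC)
  filter_upwards [hM, hZprob η hηpos (δ/2) (by linarith)] with n h1 h2
  have hsub : {ω | ε ≤ (Real.sqrt n)⁻¹ *
        |∑ j ∈ Finset.range n, ((C1 * (Y j ω - θhat n ω) ^ 2 - C2)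
          - (C1 * (Y j ω - θ0) ^ 2 - C2))|}
      ⊆ {ω | M < Real.sqrt n * |θhat n ω - θ0|}
        ∪ {ω | η ≤ |θhat n ω + θ0 - 2 * ((∑ i ∈ Finset.range n, Y i ω) / n)|} := by
    intro ω hω
    simp only [Set.mem_setOf_eq, Set.mem_union] at hω ⊢
    rw [aux_alg n C1 C2 (θhat n ω) θ0 (fun j => Y j ω)] at hω
    by_cases hX : M < Real.sqrt n * |θhat n ω - θ0|
    · exact Or.inl hX
    · right
      push_neg at hX
      by_contra hZ
      push_neg at hZ
      set X := Real.sqrt n * |θhat n ω - θ0| with hXdef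
      set Z := |θhat n ω + θ0 - 2 * ((∑ i ∈ Finset.range n, Y i ω) / n)| with hZdef
      have hXM' : X ≤ M' := le_trans hX (le_max_left _ _)
      have hX0 : 0 ≤ X := by positivity
      have hZ0 : 0 ≤ Z := abs_nonneg _
      have hlt : |C1| * X * Z < ε := by
        calc |C1| * X * Z ≤ ((|C1| + 1) * (M' + 1)) * Z := by
              apply mul_le_mul_of_nonneg_right _ hZ0
              nlinarith [abs_nonneg C1]
          _ < ((|C1| + 1) * (M' + 1)) * η := mul_lt_mul_of_pos_left hZ hC
          _ = ε := by rw [mul_comm]; exact hηε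
      linarith
  calc (P _).toReal
      ≤ (P ({ω | M < Real.sqrt n * |θhat n ω - θ0|}
          ∪ {ω | η ≤ |θhat n ω + θ0 - 2 * ((∑ i ∈ Finset.range n, Y i ω) / n)|})).toReal :=
        ENNReal.toReal_mono (measure_ne_top _ _) (measure_mono hsub)
    _ ≤ (P {ω | M < Real.sqrt n * |θhat n ω - θ0|}).toReal
          + (P {ω | η ≤ |θhat n ω + θ0 - 2 * ((∑ i ∈ Finset.range n, Y i ω) / n)|}).toReal := by
        rw [← ENNReal.toReal_add (measure_ne_top _ _) (measure_ne_top _ _)]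
        exact ENNReal.toReal_mono (by simp [ENNReal.add_ne_top, measure_ne_top])
          (measure_union_le _ _)
    _ < δ/2 + δ/2 := add_lt_add h1 h2
    _ = δ := by ring
end
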